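/- Let S be a Hilbert–Schmidt operator and V a positive compact operator on a separable Hilbert space, and suppose the spectral projection Q = E_V[0,s] satisfies rank(1−Q) ≤ n. Then n · μ(2n,S)² ≤ ‖S Q‖_{HS}², where μ(k,S) denotes the k-th singular value of S. -/

import Mathlib

open scoped InnerProductSpace

/-- The `n`-th singular value (approximation number) of a bounded operator `T`:
the distance from `T` to the operators of rank at most `n`. For compact operators
on a Hilbert space this is the decreasing sequence of singular values `μ(n,T)`. -/
noncomputable def approxNum {H : Type*} [NormedAddCommGroup H] [InnerProductSpace ℂ H]
    (T : H →L[ℂ] H) (n : ℕ) : ℝ :=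
  sInf ((fun A : H →L[ℂ] H => ‖T - A‖) ''
    {A | FiniteDimensional ℂ (LinearMap.range (A : H →ₗ[ℂ] H)) ∧
      Module.finrank ℂ (LinearMap.range (A : H →ₗ[ℂ] H)) ≤ n})

section Aux

variable {H : Type*} [NormedAddCommGroup H] [InnerProductSpace ℂ H]

lemma approxNum_set_nonempty (T : H →L[ℂ] H) (n : ℕ) :
    ((fun A : H →L[ℂ] H => ‖T - A‖) ''
      {A | FiniteDimensional ℂ (LinearMap.range (A : H →ₗ[ℂ] H)) ∧
        Module.finrank ℂ (LinearMap.range (A : H →ₗ[ℂ] H)) ≤ n}).Nonempty := by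
  have h0 : (LinearMap.range ((0 : H →L[ℂ] H) : H →ₗ[ℂ] H)) = ⊥ := by
    simp
  refine ⟨‖T - 0‖, ⟨0, ⟨?_, ?_⟩, rfl⟩⟩
  · rw [h0]; infer_instance
  · rw [h0]; simp

lemma approxNum_bddBelow (T : H →L[ℂ] H) (n : ℕ) :
    BddBelow ((fun A : H →L[ℂ] H => ‖T - A‖) ''
      {A | FiniteDimensional ℂ (LinearMap.range (A : H →ₗ[ℂ] H)) ∧
        Module.finrank ℂ (LinearMap.range (A : H →ₗ[ℂ] H)) ≤ n}) :=
  ⟨0, by rintro x ⟨A, _, rfl⟩; exact norm_nonneg _⟩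

lemma approxNum_nonneg (T : H →L[ℂ] H) (n : ℕ) : 0 ≤ approxNum T n :=
  Real.sInf_nonneg (by rintro x ⟨A, _, rfl⟩; exact norm_nonneg _)

lemma approxNum_le (T A : H →L[ℂ] H) (n : ℕ)
    (h1 : FiniteDimensional ℂ (LinearMap.range (A : H →ₗ[ℂ] H)))
    (h2 : Module.finrank ℂ (LinearMap.range (A : H →ₗ[ℂ] H)) ≤ n) :
    approxNum T n ≤ ‖T - A‖ :=
  csInf_le (approxNum_bddBelow T n) ⟨A, ⟨h1, h2⟩, rfl⟩

lemma approxNum_antitone (T : H →L[ℂ] H) {m n : ℕ} (h : m ≤ n) :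
    approxNum T n ≤ approxNum T m := by
  apply csInf_le_csInf (approxNum_bddBelow T n) (approxNum_set_nonempty T m)
  rintro x ⟨A, ⟨h1, h2⟩, rfl⟩
  exact ⟨A, ⟨h1, h2.trans h⟩, rfl⟩

/-- If `rank B ≤ n` then `μ(n+k, A + B) ≤ μ(k, A)`. -/
lemma approxNum_add_le (A B : H →L[ℂ] H) (n k : ℕ)
    (h1 : FiniteDimensional ℂ (LinearMap.range (B : H →ₗ[ℂ] H)))
    (h2 : Module.finrank ℂ (LinearMap.range (B : H →ₗ[ℂ] H)) ≤ n) :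
    approxNum (A + B) (n + k) ≤ approxNum A k := by
  apply le_csInf (approxNum_set_nonempty A k)
  rintro x ⟨A', ⟨hA1, hA2⟩, rfl⟩
  have hle : LinearMap.range ((A' + B : H →L[ℂ] H) : H →ₗ[ℂ] H) ≤
      LinearMap.range (A' : H →ₗ[ℂ] H) ⊔ LinearMap.range (B : H →ₗ[ℂ] H) := by
    rintro x ⟨y, rfl⟩
    exact Submodule.add_mem_sup (LinearMap.mem_range_self _ y) (LinearMap.mem_range_self _ y)
  haveI := hA1; haveI := h1
  haveI : FiniteDimensional ℂ
      (LinearMap.range (A' : H →ₗ[ℂ] H) ⊔ LinearMap.range (B : H →ₗ[ℂ] H) : Submodule ℂ H) :=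
    Submodule.finiteDimensional_sup _ _
  haveI : FiniteDimensional ℂ (LinearMap.range ((A' + B : H →L[ℂ] H) : H →ₗ[ℂ] H)) :=
    Submodule.finiteDimensional_of_le hle
  have hrk : Module.finrank ℂ (LinearMap.range ((A' + B : H →L[ℂ] H) : H →ₗ[ℂ] H)) ≤ n + k := by
    calc Module.finrank ℂ (LinearMap.range ((A' + B : H →L[ℂ] H) : H →ₗ[ℂ] H))
        ≤ Module.finrank ℂ
          (LinearMap.range (A' : H →ₗ[ℂ] H) ⊔ LinearMap.range (B : H →ₗ[ℂ] H) : Submodule ℂ H) :=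
          Submodule.finrank_mono hle
      _ ≤ Module.finrank ℂ (LinearMap.range (A' : H →ₗ[ℂ] H)) +
            Module.finrank ℂ (LinearMap.range (B : H →ₗ[ℂ] H)) :=
          Submodule.finrank_add_le_finrank_add_finrank _ _
      _ ≤ k + n := add_le_add hA2 h2
      _ = n + k := Nat.add_comm _ _
  have := approxNum_le (A + B) (A' + B) (n + k) inferInstance hrk
  simpa [add_sub_add_right_eq_sub] using this

end Aux

/-- **Lemma.** Let `S` be a Hilbert–Schmidt operator and `V` a positive compact
operator on a separable Hilbert space, and let `Q = E_V[0,s]` be a spectral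
projection of `V` with `rank(1 - Q) ≤ n`. Then `n · μ(2n, S)² ≤ ‖S Q‖²_{HS}`,
where the squared Hilbert–Schmidt norm is the sum of the squared singular
values. -/
theorem mul_approxNum_sq_le_hilbertSchmidt_sq
    {H : Type*} [NormedAddCommGroup H] [InnerProductSpace ℂ H] [CompleteSpace H]
    (S V Q : H →L[ℂ] H) (s : ℝ) (n : ℕ)
    (hS : Summable (fun k => approxNum S k ^ 2))
    (hV : V.IsPositive) (hVcpt : IsCompactOperator V)
    -- `Q` is the spectral projection `E_V[0,s]` of `V`:
    (hQsa : IsSelfAdjoint Q) (hQproj : Q.comp Q = Q)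
    (hQV : Q.comp V = V.comp Q)
    (hVQ : ‖V.comp Q‖ ≤ s)
    (hcompl : ∀ x : H, Q x = 0 → s * ‖x‖ ^ 2 ≤ (⟪V x, x⟫_ℂ).re)
    -- `rank (1 - Q) ≤ n`:
    (hfin : FiniteDimensional ℂ (LinearMap.range ((1 - Q : H →L[ℂ] H) : H →ₗ[ℂ] H)))
    (hrank : Module.finrank ℂ (LinearMap.range ((1 - Q : H →L[ℂ] H) : H →ₗ[ℂ] H)) ≤ n) :
    (n : ℝ) * approxNum S (2 * n) ^ 2 ≤ ∑' k, approxNum (S.comp Q) k ^ 2 := by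
  -- `Q` is a contraction
  have hQnorm : ∀ x : H, ‖Q x‖ ≤ ‖x‖ := by
    intro x
    rcases eq_or_ne (Q x) 0 with h | h
    · simp [h]
    have h1 : (‖Q x‖ : ℝ) ^ 2 = (⟪Q x, Q x⟫_ℂ).re := by
      rw [← inner_self_eq_norm_sq (𝕜 := ℂ)]; rfl
    have h2 : ⟪Q x, Q x⟫_ℂ = ⟪Q (Q x), x⟫_ℂ := by
      rw [← ContinuousLinearMap.adjoint_inner_left, hQsa.adjoint_eq]
    have h3 : Q (Q x) = Q x := by
      have := congrArg (fun T : H →L[ℂ] H => T x) hQproj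
      simpa using this
    have h4 : (‖Q x‖ : ℝ) ^ 2 ≤ ‖Q x‖ * ‖x‖ := by
      rw [h1, h2, h3]
      calc (⟪Q x, x⟫_ℂ).re ≤ ‖⟪Q x, x⟫_ℂ‖ := Complex.re_le_norm _
        _ ≤ ‖Q x‖ * ‖x‖ := norm_inner_le_norm _ _
    have hpos : (0 : ℝ) < ‖Q x‖ := norm_pos_iff.mpr h
    nlinarith
  -- rank bound for `S ∘ (1 - Q)`
  have hBfin : FiniteDimensional ℂ
      (LinearMap.range ((S.comp (1 - Q) : H →L[ℂ] H) : H →ₗ[ℂ] H)) := by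
    rw [ContinuousLinearMap.toLinearMap_comp, LinearMap.range_comp]
    exact Module.Finite.map _ _
  have hBrank : Module.finrank ℂ
      (LinearMap.range ((S.comp (1 - Q) : H →L[ℂ] H) : H →ₗ[ℂ] H)) ≤ n := by
    rw [ContinuousLinearMap.toLinearMap_comp, LinearMap.range_comp]
    exact (Submodule.finrank_map_le _ _).trans hrank
  -- `S = S∘Q + S∘(1-Q)`
  have hsplit : S.comp Q + S.comp (1 - Q) = S := by
    rw [← ContinuousLinearMap.mul_def, ← ContinuousLinearMap.mul_def, ← mul_add]
    simp [ContinuousLinearMap.mul_def]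
  -- key estimate: μ(n+k, S) ≤ μ(k, S∘Q)
  have hkey : ∀ k, approxNum S (n + k) ≤ approxNum (S.comp Q) k := by
    intro k
    have := approxNum_add_le (S.comp Q) (S.comp (1 - Q)) n k hBfin hBrank
    rwa [hsplit] at this
  -- μ(k, S∘Q) ≤ μ(k, S)
  have hcontr : ∀ k, approxNum (S.comp Q) k ≤ approxNum S k := by
    intro k
    apply le_csInf (approxNum_set_nonempty S k)
    rintro x ⟨A, ⟨hA1, hA2⟩, rfl⟩
    haveI := hA1
    have hle : LinearMap.range ((A.comp Q : H →L[ℂ] H) : H →ₗ[ℂ] H) ≤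
        LinearMap.range (A : H →ₗ[ℂ] H) := by
      rintro x ⟨y, rfl⟩
      exact ⟨Q y, rfl⟩
    have hfin' : FiniteDimensional ℂ
        (LinearMap.range ((A.comp Q : H →L[ℂ] H) : H →ₗ[ℂ] H)) :=
      Submodule.finiteDimensional_of_le hle
    have hrk' : Module.finrank ℂ
        (LinearMap.range ((A.comp Q : H →L[ℂ] H) : H →ₗ[ℂ] H)) ≤ k :=
      (Submodule.finrank_mono hle).trans hA2
    refine (approxNum_le (S.comp Q) (A.comp Q) k hfin' hrk').trans ?_
    rw [← ContinuousLinearMap.sub_comp]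
    refine ContinuousLinearMap.opNorm_le_bound _ (norm_nonneg _) fun x => ?_
    calc ‖(S - A) (Q x)‖ ≤ ‖S - A‖ * ‖Q x‖ := ContinuousLinearMap.le_opNorm _ _
      _ ≤ ‖S - A‖ * ‖x‖ := by
          exact mul_le_mul_of_nonneg_left (hQnorm x) (norm_nonneg _)
  -- summability of the RHS
  have hnonneg : ∀ k, (0 : ℝ) ≤ approxNum (S.comp Q) k ^ 2 := fun k => sq_nonneg _
  have hsum : Summable (fun k => approxNum (S.comp Q) k ^ 2) := by
    refine Summable.of_nonneg_of_le hnonneg (fun k => ?_) hS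
    exact pow_le_pow_left₀ (approxNum_nonneg _ _) (hcontr k) 2
  -- finite sum bound
  have hfinsum : (n : ℝ) * approxNum S (2 * n) ^ 2 ≤
      ∑ k ∈ Finset.range n, approxNum (S.comp Q) k ^ 2 := by
    have : ∀ k ∈ Finset.range n,
        approxNum S (2 * n) ^ 2 ≤ approxNum (S.comp Q) k ^ 2 := by
      intro k hk
      have hkn : k < n := Finset.mem_range.mp hk
      have h1 : approxNum S (2 * n) ≤ approxNum S (n + k) :=
        approxNum_antitone S (by omega)
      have h2 : approxNum S (2 * n) ≤ approxNum (S.comp Q) k := h1.trans (hkey k)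
      exact pow_le_pow_left₀ (approxNum_nonneg _ _) h2 2
    calc (n : ℝ) * approxNum S (2 * n) ^ 2
        = ∑ _k ∈ Finset.range n, approxNum S (2 * n) ^ 2 := by
          simp [Finset.sum_const, mul_comm]
      _ ≤ ∑ k ∈ Finset.range n, approxNum (S.comp Q) k ^ 2 := Finset.sum_le_sum this
  exact hfinsum.trans (hsum.sum_le_tsum (Finset.range n) (fun k _ => hnonneg k))
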